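/- Shuffle of words ending in distinguished letters with x0-tails: for positive integers a, c, (x1 x0^{a-1}) ⧢ (x1 x0^{c-1}) = ∑_{i=1}^{a} C(a-i+c-1, c-1) x1 x0^{i-1} x1 x0^{a+c-i-1} + ∑_{i=1}^{c} C(c-i+a-1, a-1) x1 x0^{i-1} x1 x0^{a+c-i-1}, where the first sum collects terms whose first x1 comes from the first word and the second sum those from the second word. -/

import Mathlib

/-- The shuffle product of words over `{x0, x1}` (encoded as `Bool`, `x1 = true`,
`x0 = false`), as a multiset of words. -/
def sh : List Bool → List Bool → Multiset (List Bool)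
  | [], v => {v}
  | a :: u, [] => {a :: u}
  | a :: u, b :: v =>
      (sh u (b :: v)).map (a :: ·) + (sh (a :: u) v).map (b :: ·)
termination_by u v => u.length + v.length


lemma sh_nil_right (u : List Bool) : sh u [] = {u} := by
  cases u <;> simp [sh]

lemma sh_comm (u v : List Bool) : sh u v = sh v u := by
  induction u generalizing v with
  | nil => cases v <;> simp [sh]
  | cons a u ih =>
    induction v with
    | nil => simp [sh]
    | cons b v ihv => rw [sh, sh, ih, ihv, add_comm]

lemma sh_map_finset_sum {ι : Type*} (s : Finset ι) (g : ι → Multiset (List Bool))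
    (f : List Bool → List Bool) :
    Multiset.map f (∑ i ∈ s, g i) = ∑ i ∈ s, Multiset.map f (g i) := by
  exact map_sum (Multiset.mapAddMonoidHom f) g s

lemma sh_rep_rep : ∀ m n : ℕ, sh (List.replicate m false) (List.replicate n false)
    = (m + n).choose m • ({List.replicate (m + n) false} : Multiset (List Bool))
  | 0, n => by simp [sh]
  | m + 1, 0 => by simp [sh_nil_right]
  | m + 1, n + 1 => by
    show sh (false :: List.replicate m false) (false :: List.replicate n false) = _
    rw [sh, show false :: List.replicate n false = List.replicate (n + 1) false from rfl,
      show false :: List.replicate m false = List.replicate (m + 1) false from rfl,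
      sh_rep_rep m (n + 1), sh_rep_rep (m + 1) n,
      Multiset.map_nsmul, Multiset.map_nsmul]
    simp only [Multiset.map_singleton]
    rw [show (false :: List.replicate (m + (n + 1)) false) = List.replicate (m + 1 + (n + 1)) false
        by rw [show m + 1 + (n + 1) = m + (n + 1) + 1 by omega]; rfl,
      show (false :: List.replicate (m + 1 + n) false) = List.replicate (m + 1 + (n + 1)) false
        by rw [show m + 1 + (n + 1) = m + 1 + n + 1 by omega]; rfl,
      ← add_nsmul]
    congr 1
    rw [show m + (n + 1) = m + n + 1 by omega, show m + 1 + n = m + n + 1 by omega,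
      show m + 1 + (n + 1) = (m + n + 1) + 1 by omega, Nat.choose_succ_succ (m + n + 1) m]
  termination_by m n => m + n

lemma sh_rep_true (m n : ℕ) : sh (List.replicate m false) (true :: List.replicate n false)
    = ∑ j ∈ Finset.range (m + 1), (m - j + n).choose n •
        ({List.replicate j false ++ true :: List.replicate (m - j + n) false} :
          Multiset (List Bool)) := by
  induction m with
  | zero => simp [sh]
  | succ m ih =>
    show sh (false :: List.replicate m false) _ = _
    rw [sh, ih, show false :: List.replicate m false = List.replicate (m + 1) false from rfl,
      sh_comm, sh_rep_rep, sh_map_finset_sum, Multiset.map_nsmul, Multiset.map_singleton]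
    conv_rhs => rw [Finset.sum_range_succ']
    simp only [Multiset.map_nsmul, Multiset.map_singleton, Nat.succ_sub_succ,
      List.replicate_zero, List.nil_append, Nat.sub_zero]
    congr 1
    rw [show n + (m + 1) = m + 1 + n by omega]

/-- `(x1 x0^{a-1}) ⧢ (x1 x0^{c-1}) = ∑_{i=1}^{a} C(a-i+c-1, c-1) x1 x0^{i-1} x1 x0^{a+c-i-1}
+ ∑_{i=1}^{c} C(c-i+a-1, a-1) x1 x0^{i-1} x1 x0^{a+c-i-1}`. -/
theorem stmt_18 (a c : ℕ) (ha : 1 ≤ a) (hc : 1 ≤ c) :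
    sh (true :: List.replicate (a - 1) false) (true :: List.replicate (c - 1) false) =
      (∑ i ∈ Finset.Icc 1 a, Nat.choose (a - i + c - 1) (c - 1) •
        ({true :: (List.replicate (i - 1) false ++
            true :: List.replicate (a + c - i - 1) false)} : Multiset (List Bool))) +
      (∑ i ∈ Finset.Icc 1 c, Nat.choose (c - i + a - 1) (a - 1) •
        ({true :: (List.replicate (i - 1) false ++
            true :: List.replicate (a + c - i - 1) false)} : Multiset (List Bool))) := by
  obtain ⟨a', rfl⟩ : ∃ a', a = a' + 1 := ⟨a - 1, by omega⟩
  obtain ⟨c', rfl⟩ : ∃ c', c = c' + 1 := ⟨c - 1, by omega⟩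
  simp only [Nat.add_sub_cancel]
  rw [sh, sh_comm (true :: List.replicate a' false), sh_rep_true, sh_rep_true,
    sh_map_finset_sum, sh_map_finset_sum]
  simp only [Multiset.map_nsmul, Multiset.map_singleton]
  rw [← Finset.Ico_add_one_right_eq_Icc, ← Finset.Ico_add_one_right_eq_Icc, Finset.sum_Ico_eq_sum_range,
    Finset.sum_Ico_eq_sum_range]
  simp only [Nat.add_sub_cancel, show ∀ k, k + 1 + 1 - 1 = k + 1 from fun k => rfl]
  congr 1
  · refine Finset.sum_congr rfl fun j hj => ?_
    have hja : j ≤ a' := Nat.lt_succ_iff.mp (Finset.mem_range.mp hj)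
    rw [show a' + 1 - (1 + j) + (c' + 1) - 1 = a' - j + c' by omega,
      show 1 + j - 1 = j by omega,
      show a' + 1 + (c' + 1) - (1 + j) - 1 = a' - j + c' by omega]
  · refine Finset.sum_congr rfl fun j hj => ?_
    have hjc : j ≤ c' := Nat.lt_succ_iff.mp (Finset.mem_range.mp hj)
    rw [show c' + 1 - (1 + j) + (a' + 1) - 1 = c' - j + a' by omega,
      show 1 + j - 1 = j by omega,
      show a' + 1 + (c' + 1) - (1 + j) - 1 = c' - j + a' by omega]
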